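/- In the breadth-first construction of the grounded labelling, the function MM assigning to each in-labelled argument the value 2k+1 where k is minimal with x ∈ I_k, and to each out-labelled argument the value 2k where k is minimal with x ∈ O_k, is a valid min-max numbering of the grounded labelling. -/
import Mathlib


inductive Label where
  | inn | out | und
deriving DecidableEq

/-- A labelling is admissible if every in-labelled argument has all its attackers
labelled out, and every out-labelled argument has at least one in-labelled attacker. -/
def Admissible {Ar : Type*} (att : Ar → Ar → Prop) (L : Ar → Label) : Prop :=
  (∀ x, L x = Label.inn → ∀ y, att y x → L y = Label.out) ∧
  (∀ x, L x = Label.out → ∃ y, att y x ∧ L y = Label.inn)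

/-- A min-max numbering (with only natural-number values): in-arguments are numbered
1 + max of the numbers of their out-labelled attackers (max ∅ = 0), and out-arguments
1 + min of the numbers of their in-labelled attackers. -/
def IsMinMax {Ar : Type*} (att : Ar → Ar → Prop) (L : Ar → Label) (MM : Ar → ℕ) : Prop :=
  (∀ x, L x = Label.inn → MM x = sSup (MM '' {y | att y x ∧ L y = Label.out}) + 1) ∧
  (∀ x, L x = Label.out → MM x = sInf (MM '' {y | att y x ∧ L y = Label.inn}) + 1)

/-- Strongly admissible: admissible and admitting a min-max numbering with only
natural-number (finite) values. -/
def StronglyAdmissible {Ar : Type*} (att : Ar → Ar → Prop) (L : Ar → Label) : Prop :=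
  Admissible att L ∧ ∃ MM : Ar → ℕ, IsMinMax att L MM

/-- Complete labelling: admissible, and every undec argument has an undec attacker
and no in-labelled attacker. -/
def CompleteLab {Ar : Type*} (att : Ar → Ar → Prop) (L : Ar → Label) : Prop :=
  Admissible att L ∧
  ∀ x, L x = Label.und →
    (∃ y, att y x ∧ L y = Label.und) ∧ ∀ y, att y x → L y ≠ Label.inn

/-- The order on labellings: Lab1 ⊑ Lab2 iff in(Lab1) ⊆ in(Lab2) and out(Lab1) ⊆ out(Lab2). -/
def LabLe {Ar : Type*} (L1 L2 : Ar → Label) : Prop :=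
  (∀ x, L1 x = Label.inn → L2 x = Label.inn) ∧
  (∀ x, L1 x = Label.out → L2 x = Label.out)

/-- In the breadth-first construction, numbering in-arguments by 2k+1
(k minimal with x ∈ I k) and out-arguments by 2k (k minimal with x ∈ O k) gives a
valid min-max numbering of the grounded labelling. -/
theorem breadthFirst_minMax
    {Ar : Type*} [Fintype Ar] (att : Ar → Ar → Prop)
    (I O : ℕ → Set Ar)
    (hI0 : I 0 = {x | ∀ y, ¬ att y x})
    (hO0 : O 0 = ∅)
    (hO : ∀ k, O (k+1) = {y | ∃ x, att x y ∧ ∃ j ≤ k, x ∈ I j})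
    (hI : ∀ k, I (k+1) = {x | ∀ y, att y x → ∃ j, 1 ≤ j ∧ j ≤ k+1 ∧ y ∈ O j})
    (Lgr : Ar → Label)
    (hgrin : ∀ x, Lgr x = Label.inn ↔ ∃ k, x ∈ I k)
    (hgrout : ∀ x, Lgr x = Label.out ↔ ∃ k, x ∈ O k)
    (MM : Ar → ℕ)
    (hMMin : ∀ x, Lgr x = Label.inn → MM x = 2 * sInf {k | x ∈ I k} + 1)
    (hMMout : ∀ x, Lgr x = Label.out → MM x = 2 * sInf {k | x ∈ O k}) :
    IsMinMax att Lgr MM := by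
  have lemA : ∀ m x, x ∉ I m → ∃ y, att y x ∧ ∀ j ≤ m, y ∉ O j := by
    intro m x hx
    cases m with
    | zero =>
      rw [hI0] at hx
      simp only [Set.mem_setOf_eq, not_forall, not_not] at hx
      obtain ⟨y, hy⟩ := hx
      refine ⟨y, hy, fun j hj => ?_⟩
      interval_cases j
      rw [hO0]; exact Set.notMem_empty y
    | succ m =>
      rw [hI m] at hx
      simp only [Set.mem_setOf_eq, not_forall] at hx
      obtain ⟨y, hy, hn⟩ := hx
      push_neg at hn
      refine ⟨y, hy, fun j hj => ?_⟩
      cases j with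
      | zero => rw [hO0]; exact Set.notMem_empty y
      | succ j =>
        intro hmem
        exact absurd hmem (by
          have := hn (j+1) (Nat.succ_le_succ (Nat.zero_le _)) hj
          exact this)
  constructor
  · -- in case
    intro x hx
    rw [hMMin x hx]
    have hne : {k | x ∈ I k}.Nonempty := (hgrin x).mp hx
    have hxk : x ∈ I (sInf {k | x ∈ I k}) := Nat.sInf_mem hne
    rcases Nat.eq_zero_or_pos (sInf {k | x ∈ I k}) with h0 | hpos
    · rw [h0] at hxk ⊢
      rw [hI0] at hxk
      have hemp : {y | att y x ∧ Lgr y = Label.out} = ∅ := by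
        ext y
        simp only [Set.mem_setOf_eq, Set.mem_empty_iff_false, iff_false, not_and]
        intro ha _; exact hxk y ha
      rw [hemp, Set.image_empty, csSup_empty]
      simp
    · obtain ⟨m, hm⟩ : ∃ m, sInf {k | x ∈ I k} = m + 1 :=
        ⟨_, (Nat.succ_pred_eq_of_pos hpos).symm⟩
      rw [hm] at hxk ⊢
      rw [hI m] at hxk
      -- every out attacker has MM ≤ 2(m+1)
      have hbdd : ∀ z ∈ MM '' {y | att y x ∧ Lgr y = Label.out}, z ≤ 2 * (m + 1) := by
        rintro z ⟨y, ⟨hya, _⟩, rfl⟩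
        obtain ⟨j, hj1, hj2, hjO⟩ := hxk y hya
        have hyout : Lgr y = Label.out := (hgrout y).mpr ⟨j, hjO⟩
        rw [hMMout y hyout]
        have : sInf {k | y ∈ O k} ≤ j := Nat.sInf_le hjO
        omega
      -- the witness attacker achieving 2(m+1)
      have hxm : x ∉ I m := by
        intro hmem
        have := Nat.sInf_le (s := {k | x ∈ I k}) hmem
        omega
      obtain ⟨y, hya, hyn⟩ := lemA m x hxm
      obtain ⟨j, hj1, hj2, hjO⟩ := hxk y hya
      have hj : j = m + 1 := by
        by_contra h
        exact hyn j (by omega) hjO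
      subst hj
      have hyout : Lgr y = Label.out := (hgrout y).mpr ⟨m + 1, hjO⟩
      have hyne : {k | y ∈ O k}.Nonempty := ⟨m + 1, hjO⟩
      have hysinf : sInf {k | y ∈ O k} = m + 1 := by
        have h1 : sInf {k | y ∈ O k} ≤ m + 1 := Nat.sInf_le hjO
        have h2 : y ∈ O (sInf {k | y ∈ O k}) := Nat.sInf_mem hyne
        by_contra h
        exact hyn _ (by omega) h2
      have hMMy : MM y = 2 * (m + 1) := by
        rw [hMMout y hyout, hysinf]
      have hmem : 2 * (m + 1) ∈ MM '' {y | att y x ∧ Lgr y = Label.out} :=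
        ⟨y, ⟨hya, hyout⟩, hMMy⟩
      have : sSup (MM '' {y | att y x ∧ Lgr y = Label.out}) = 2 * (m + 1) :=
        le_antisymm (csSup_le ⟨_, hmem⟩ hbdd) (le_csSup ⟨_, hbdd⟩ hmem)
      rw [this]
  · -- out case
    intro x hx
    rw [hMMout x hx]
    have hne : {k | x ∈ O k}.Nonempty := (hgrout x).mp hx
    have hxk : x ∈ O (sInf {k | x ∈ O k}) := Nat.sInf_mem hne
    have hpos : 0 < sInf {k | x ∈ O k} := by
      rcases Nat.eq_zero_or_pos (sInf {k | x ∈ O k}) with h0 | h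
      · rw [h0, hO0] at hxk; exact absurd hxk (Set.notMem_empty x)
      · exact h
    obtain ⟨m, hm⟩ : ∃ m, sInf {k | x ∈ O k} = m + 1 :=
      ⟨_, (Nat.succ_pred_eq_of_pos hpos).symm⟩
    rw [hm] at hxk ⊢
    rw [hO m] at hxk
    obtain ⟨y, hya, j, hj, hjI⟩ := hxk
    -- every in attacker has MM ≥ 2m+1
    have hlow : ∀ z ∈ MM '' {y | att y x ∧ Lgr y = Label.inn}, 2 * m + 1 ≤ z := by
      rintro z ⟨w, ⟨hwa, hwin⟩, rfl⟩
      rw [hMMin w hwin]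
      have hwne : {k | w ∈ I k}.Nonempty := (hgrin w).mp hwin
      have hwk : w ∈ I (sInf {k | w ∈ I k}) := Nat.sInf_mem hwne
      have : m ≤ sInf {k | w ∈ I k} := by
        by_contra h
        push_neg at h
        have hxO : x ∈ O (sInf {k | w ∈ I k} + 1) := by
          rw [hO]
          exact ⟨w, hwa, sInf {k | w ∈ I k}, le_refl _, hwk⟩
        have := Nat.sInf_le (s := {k | x ∈ O k}) hxO
        omega
      omega
    -- the witness y with MM y = 2m+1
    have hyin : Lgr y = Label.inn := (hgrin y).mpr ⟨j, hjI⟩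
    have hyMM : MM y = 2 * m + 1 := by
      have := hlow (MM y) ⟨y, ⟨hya, hyin⟩, rfl⟩
      rw [hMMin y hyin] at this ⊢
      have h2 : sInf {k | y ∈ I k} ≤ j := Nat.sInf_le hjI
      omega
    have hmem : 2 * m + 1 ∈ MM '' {y | att y x ∧ Lgr y = Label.inn} :=
      ⟨y, ⟨hya, hyin⟩, hyMM⟩
    have : sInf (MM '' {y | att y x ∧ Lgr y = Label.inn}) = 2 * m + 1 :=
      le_antisymm (Nat.sInf_le hmem) (le_csInf ⟨_, hmem⟩ hlow)
    rw [this]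
    omega
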